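/- arXiv:0907.0790 — 2 statements merged into one kernel-verified Lean document; each statement's English description precedes it below -/
import Mathlib

section
/- For coprime positive integers a and b, the factorial ratio (2an)!(2bn)! / ( (an)!(bn)!((a+b)n)! ) is an integer for every n ≥ 0. -/
open scoped Nat

lemma key_div_ineq (x y m : ℕ) :
    x / m + y / m + (x + y) / m ≤ 2 * x / m + 2 * y / m := by
  rcases Nat.eq_zero_or_pos m with hm | hm
  · simp [hm]
  have h1 : (x + y) / m = x / m + y / m + if m ≤ x % m + y % m then 1 else 0 :=
    Nat.add_div hm
  have h2 : 2 * x / m = x / m + x / m + if m ≤ x % m + x % m then 1 else 0 := by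
    rw [two_mul]; exact Nat.add_div hm
  have h3 : 2 * y / m = y / m + y / m + if m ≤ y % m + y % m then 1 else 0 := by
    rw [two_mul]; exact Nat.add_div hm
  have hx := Nat.mod_lt x hm
  have hy := Nat.mod_lt y hm
  rw [h1, h2, h3]
  split_ifs <;> omega

theorem factorial_ratio_family_three_integral
    (a b : ℕ) (ha : 0 < a) (hb : 0 < b) (hab : Nat.Coprime a b) (n : ℕ) :
    (a * n)! * (b * n)! * ((a + b) * n)! ∣ (2 * a * n)! * (2 * b * n)! := by
  have hL : (a * n)! * (b * n)! * ((a + b) * n)! ≠ 0 := by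
    positivity
  have hR : (2 * a * n)! * (2 * b * n)! ≠ 0 := by positivity
  rw [← Nat.factorization_le_iff_dvd hL hR]
  intro p
  by_cases hp : p.Prime
  · haveI : Fact p.Prime := ⟨hp⟩
    set B := 2 * (a + b) * n + 1 with hB
    have hlog : ∀ N : ℕ, N ≤ 2 * (a + b) * n → Nat.log p N < B := by
      intro N hN
      calc Nat.log p N ≤ N := Nat.log_le_self p N
        _ < B := by omega
    have fa : ((a * n)!).factorization p
        = ∑ i ∈ Finset.Ico 1 B, a * n / p ^ i := by
      rw [Nat.factorization_def _ hp]; exact padicValNat_factorial (hlog _ (by nlinarith))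
    have fb : ((b * n)!).factorization p
        = ∑ i ∈ Finset.Ico 1 B, b * n / p ^ i := by
      rw [Nat.factorization_def _ hp]; exact padicValNat_factorial (hlog _ (by nlinarith))
    have fab : (((a + b) * n)!).factorization p
        = ∑ i ∈ Finset.Ico 1 B, (a + b) * n / p ^ i := by
      rw [Nat.factorization_def _ hp]; exact padicValNat_factorial (hlog _ (by nlinarith))
    have f2a : ((2 * a * n)!).factorization p
        = ∑ i ∈ Finset.Ico 1 B, 2 * a * n / p ^ i := by
      rw [Nat.factorization_def _ hp]; exact padicValNat_factorial (hlog _ (by nlinarith))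
    have f2b : ((2 * b * n)!).factorization p
        = ∑ i ∈ Finset.Ico 1 B, 2 * b * n / p ^ i := by
      rw [Nat.factorization_def _ hp]; exact padicValNat_factorial (hlog _ (by nlinarith))
    have hne : ∀ m : ℕ, (m !) ≠ 0 := fun m => (Nat.factorial_pos m).ne'
    rw [Nat.factorization_mul (by positivity) (hne _),
        Nat.factorization_mul (hne _) (hne _),
        Nat.factorization_mul (hne _) (hne _)]
    simp only [Finsupp.coe_add, Pi.add_apply]
    rw [fa, fb, fab, f2a, f2b, ← Finset.sum_add_distrib, ← Finset.sum_add_distrib,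
        ← Finset.sum_add_distrib]
    apply Finset.sum_le_sum
    intro i _
    have := key_div_ineq (a * n) (b * n) (p ^ i)
    have e1 : (a + b) * n = a * n + b * n := by ring
    have e2 : 2 * a * n = 2 * (a * n) := by ring
    have e3 : 2 * b * n = 2 * (b * n) := by ring
    rw [e1, e2, e3]
    exact this
  · simp [Nat.factorization_eq_zero_of_not_prime _ hp]
end

section
/- For positive integers s₁, s₂, the bivariate series f_{(s₁,s₂)}(x₁,x₂) = ∑_{m₁,m₂≥0} ( (s₁m₁+s₂m₂)! / ((s₁m₁)!(s₂m₂)!) ) x₁^{m₁} x₂^{m₂} defines a rational function of (x₁,x₂). -/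
open scoped Nat

/-- A bivariate sequence of coefficients is the Taylor series of a rational function
(with denominator non-vanishing at the origin). -/
def IsRationalBivariateSeries (a : ℕ → ℕ → ℂ) : Prop :=
  ∃ p q : MvPolynomial (Fin 2) ℂ, MvPolynomial.eval (fun _ => (0 : ℂ)) q ≠ 0 ∧
    ∃ ε > (0 : ℝ), ∀ x y : ℂ, ‖x‖ < ε → ‖y‖ < ε →
      HasSum (fun mn : ℕ × ℕ => a mn.1 mn.2 * x ^ mn.1 * y ^ mn.2)
        (MvPolynomial.eval ![x, y] p / MvPolynomial.eval ![x, y] q)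

open Finset MvPolynomial

noncomputable section

set_option linter.unusedSectionVars false

lemma hasSum_binom (x y : ℂ) (h : ‖x‖ + ‖y‖ < 1) :
    HasSum (fun p : ℕ × ℕ => ((p.1 + p.2).choose p.1 : ℂ) * x ^ p.1 * y ^ p.2)
      (1 - x - y)⁻¹ := by
  set F : ℕ × ℕ → ℂ := fun p => ((p.1 + p.2).choose p.1 : ℂ) * x ^ p.1 * y ^ p.2 with hF
  let e : (Σ n : ℕ, Fin (n + 1)) ≃ ℕ × ℕ :=
    { toFun := fun p => ((p.2 : ℕ), p.1 - p.2)
      invFun := fun q => ⟨q.1 + q.2, ⟨q.1, by omega⟩⟩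
      left_inv := by
        rintro ⟨n, k⟩
        have hk : (k : ℕ) ≤ n := by omega
        have h1 : (k : ℕ) + (n - k) = n := by omega
        refine Sigma.ext (by simpa using h1) ?_
        simp only [h1]
        exact (Fin.heq_ext_iff (by rw [h1])).2 rfl
      right_inv := by rintro ⟨m, j⟩; simp }
  rw [← e.hasSum_iff]
  have hcomp : (F ∘ e) = fun p : Σ n : ℕ, Fin (n + 1) =>
      (p.1.choose (p.2 : ℕ) : ℂ) * x ^ (p.2 : ℕ) * y ^ (p.1 - (p.2 : ℕ)) := by
    funext ⟨n, k⟩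
    have hk : (k : ℕ) ≤ n := by omega
    simp [F, e, Nat.add_sub_cancel' hk]
  rw [hcomp]
  have key : ∀ n : ℕ, HasSum (fun k : Fin (n + 1) =>
      (n.choose (k : ℕ) : ℂ) * x ^ (k : ℕ) * y ^ (n - (k : ℕ))) ((x + y) ^ n) := by
    intro n
    have := hasSum_fintype (fun k : Fin (n + 1) =>
      (n.choose (k : ℕ) : ℂ) * x ^ (k : ℕ) * y ^ (n - (k : ℕ)))
    convert this using 1
    rw [Fin.sum_univ_eq_sum_range (fun k => (n.choose k : ℂ) * x ^ k * y ^ (n - k)) (n+1)]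
    rw [add_pow]
    exact Finset.sum_congr rfl (fun k hk => by ring)
  have hxy : ‖x + y‖ < 1 := lt_of_le_of_lt (norm_add_le x y) h
  have hgeom : HasSum (fun n : ℕ => (x + y) ^ n) (1 - x - y)⁻¹ := by
    have := hasSum_geometric_of_norm_lt_one hxy
    rw [sub_sub]; exact this
  have hsummable : Summable (fun p : Σ n : ℕ, Fin (n + 1) =>
      (p.1.choose (p.2 : ℕ) : ℂ) * x ^ (p.2 : ℕ) * y ^ (p.1 - (p.2 : ℕ))) := by
    rw [← summable_norm_iff]
    have hnorm : (fun p : Σ n : ℕ, Fin (n + 1) =>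
        ‖(p.1.choose (p.2 : ℕ) : ℂ) * x ^ (p.2 : ℕ) * y ^ (p.1 - (p.2 : ℕ))‖) =
        fun p => (p.1.choose (p.2 : ℕ) : ℝ) * ‖x‖ ^ (p.2 : ℕ) * ‖y‖ ^ (p.1 - (p.2 : ℕ)) := by
      funext p; simp [norm_mul, norm_pow]
    rw [hnorm]
    rw [summable_sigma_of_nonneg (fun p => by positivity)]
    constructor
    · intro n; exact (hasSum_fintype _).summable
    · have : (fun n : ℕ => ∑' k : Fin (n + 1),
          (n.choose (k : ℕ) : ℝ) * ‖x‖ ^ (k : ℕ) * ‖y‖ ^ (n - (k : ℕ))) =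
          fun n => (‖x‖ + ‖y‖) ^ n := by
        funext n
        rw [tsum_fintype, Fin.sum_univ_eq_sum_range
          (fun k => (n.choose k : ℝ) * ‖x‖ ^ k * ‖y‖ ^ (n - k)) (n+1), add_pow]
        exact Finset.sum_congr rfl (fun k hk => by ring)
      rw [this]
      exact summable_geometric_of_lt_one (by positivity) h
  exact HasSum.sigma_of_hasSum hgeom key hsummable


/-- scaling first variable -/
lemma coeff_scale0 (c : ℂ) (Q : MvPolynomial (Fin 2) ℂ) (d : Fin 2 →₀ ℕ) :
    coeff d (aeval ![C c * X 0, X 1] Q) = c ^ (d 0) * coeff d Q := by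
  conv_lhs => rw [Q.as_sum]
  rw [map_sum, MvPolynomial.coeff_sum]
  have hterm : ∀ e ∈ Q.support,
      coeff d (aeval ![C c * X 0, X 1] (monomial e (coeff e Q))) =
      if e = d then c ^ (e 0) * coeff e Q else 0 := by
    intro e _
    rw [aeval_monomial]
    have : (e.prod fun i k => (![C c * X 0, X 1] : Fin 2 → MvPolynomial (Fin 2) ℂ) i ^ k) =
        C (c ^ (e 0)) * (monomial e 1) := by
      rw [Finsupp.prod_fintype _ _ (fun i => pow_zero _), Fin.prod_univ_two]
      simp only [Matrix.cons_val_zero, Matrix.cons_val_one, Matrix.head_cons]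
      rw [mul_pow, ← C_pow, (monomial_eq (a := (1:ℂ)) (s := e)),
        Finsupp.prod_fintype _ _ (fun i => pow_zero _), Fin.prod_univ_two, C_1, one_mul]
      ring
    rw [this]
    have halg : (algebraMap ℂ (MvPolynomial (Fin 2) ℂ)) (coeff e Q) = C (coeff e Q) := rfl
    rw [halg, ← mul_assoc, ← C_mul, C_mul_monomial, mul_one, coeff_monomial]
    split <;> ring_nf
  rw [Finset.sum_congr rfl hterm]
  by_cases hd : d ∈ Q.support
  · rw [Finset.sum_ite_eq' Q.support d (fun e => c ^ (e 0) * coeff e Q)]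
    simp [hd]
  · rw [Finset.sum_ite_eq' Q.support d (fun e => c ^ (e 0) * coeff e Q)]
    simp [hd, MvPolynomial.notMem_support_iff.1 hd]

lemma coeff_scale1 (c : ℂ) (Q : MvPolynomial (Fin 2) ℂ) (d : Fin 2 →₀ ℕ) :
    coeff d (aeval ![X 0, C c * X 1] Q) = c ^ (d 1) * coeff d Q := by
  conv_lhs => rw [Q.as_sum]
  rw [map_sum, MvPolynomial.coeff_sum]
  have hterm : ∀ e ∈ Q.support,
      coeff d (aeval ![X 0, C c * X 1] (monomial e (coeff e Q))) =
      if e = d then c ^ (e 1) * coeff e Q else 0 := by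
    intro e _
    rw [aeval_monomial]
    have : (e.prod fun i k => (![X 0, C c * X 1] : Fin 2 → MvPolynomial (Fin 2) ℂ) i ^ k) =
        C (c ^ (e 1)) * (monomial e 1) := by
      rw [Finsupp.prod_fintype _ _ (fun i => pow_zero _), Fin.prod_univ_two]
      simp only [Matrix.cons_val_zero, Matrix.cons_val_one, Matrix.head_cons]
      rw [mul_pow, ← C_pow, (monomial_eq (a := (1:ℂ)) (s := e)),
        Finsupp.prod_fintype _ _ (fun i => pow_zero _), Fin.prod_univ_two, C_1, one_mul]
      ring
    rw [this]
    have halg : (algebraMap ℂ (MvPolynomial (Fin 2) ℂ)) (coeff e Q) = C (coeff e Q) := rfl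
    rw [halg, ← mul_assoc, ← C_mul, C_mul_monomial, mul_one, coeff_monomial]
    split <;> ring_nf
  rw [Finset.sum_congr rfl hterm]
  by_cases hd : d ∈ Q.support
  · rw [Finset.sum_ite_eq' Q.support d (fun e => c ^ (e 1) * coeff e Q)]
    simp [hd]
  · rw [Finset.sum_ite_eq' Q.support d (fun e => c ^ (e 1) * coeff e Q)]
    simp [hd, MvPolynomial.notMem_support_iff.1 hd]

/-- compression -/
def compress (a b : ℕ) (R : MvPolynomial (Fin 2) ℂ) : MvPolynomial (Fin 2) ℂ :=
  ∑ d ∈ R.support,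
    monomial (Finsupp.equivFunOnFinite.symm ![d 0 / a, d 1 / b]) (coeff d R)

lemma eval_compress (a b : ℕ) (R : MvPolynomial (Fin 2) ℂ)
    (hdvd : ∀ d ∈ R.support, a ∣ d 0 ∧ b ∣ d 1) (u v : ℂ) :
    eval ![u ^ a, v ^ b] (compress a b R) = eval ![u, v] R := by
  rw [compress, map_sum, eval_eq' ![u, v] R]
  refine Finset.sum_congr rfl (fun d hd => ?_)
  obtain ⟨h1, h2⟩ := hdvd d hd
  rw [eval_monomial, Finsupp.prod_fintype _ _ (fun i => pow_zero _), Fin.prod_univ_two,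
    Fin.prod_univ_two]
  simp only [Finsupp.equivFunOnFinite_symm_apply_apply, Matrix.cons_val_zero,
    Matrix.cons_val_one, Matrix.head_cons]
  rw [← pow_mul, ← pow_mul, Nat.mul_div_cancel' h1, Nat.mul_div_cancel' h2]

def fct (a b : ℕ) (ω ζ : ℂ) (t : ZMod a × ZMod b) : MvPolynomial (Fin 2) ℂ :=
  1 - C (ω ^ t.1.val) * X 0 - C (ζ ^ t.2.val) * X 1

variable (a b : ℕ) [NeZero a] [NeZero b] (ω ζ : ℂ)

def Qpoly : MvPolynomial (Fin 2) ℂ := ∏ t : ZMod a × ZMod b, fct a b ω ζ t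

def Ppoly : MvPolynomial (Fin 2) ℂ :=
  ∑ t : ZMod a × ZMod b, ∏ t' ∈ Finset.univ.erase t, fct a b ω ζ t'

lemma pow_mod_eq {ω : ℂ} (hω : ω ^ a = 1) (m : ℕ) : ω ^ m = ω ^ (m % a) := by
  conv_lhs => rw [← Nat.div_add_mod m a]
  rw [pow_add, pow_mul, hω, one_pow, one_mul]

lemma val_add_one_pow {ω : ℂ} (hω : ω ^ a = 1) (j : ZMod a) :
    ω ^ (j + 1).val = ω ^ j.val * ω := by
  rw [ZMod.val_add, ← pow_mod_eq a hω, pow_add, ZMod.val_one_eq_one_mod, ← pow_mod_eq a hω,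
    pow_one]

lemma scale0_fct {ω : ℂ} (hω : ω ^ a = 1) (t : ZMod a × ZMod b) :
    aeval ![C ω * X 0, X 1] (fct a b ω ζ t) = fct a b ω ζ (t.1 + 1, t.2) := by
  simp only [fct, map_sub, map_one, map_mul, aeval_C, aeval_X, MvPolynomial.algebraMap_eq]
  simp only [Matrix.cons_val_zero, Matrix.cons_val_one, Matrix.head_cons]
  rw [val_add_one_pow a hω, C_mul]
  ring

lemma scale1_fct {ζ : ℂ} (hζ : ζ ^ b = 1) (t : ZMod a × ZMod b) :
    aeval ![X 0, C ζ * X 1] (fct a b ω ζ t) = fct a b ω ζ (t.1, t.2 + 1) := by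
  simp only [fct, map_sub, map_one, map_mul, aeval_C, aeval_X, MvPolynomial.algebraMap_eq]
  simp only [Matrix.cons_val_zero, Matrix.cons_val_one, Matrix.head_cons]
  rw [val_add_one_pow b hζ, C_mul]
  ring

lemma scale0_Qpoly {ω : ℂ} (hω : ω ^ a = 1) :
    aeval ![C ω * X 0, X 1] (Qpoly a b ω ζ) = Qpoly a b ω ζ := by
  rw [Qpoly, map_prod]
  simp_rw [scale0_fct a b ζ hω]
  exact Equiv.prod_comp ((Equiv.addRight (1 : ZMod a)).prodCongr (Equiv.refl (ZMod b)))
    (fct a b ω ζ)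

lemma scale1_Qpoly {ζ : ℂ} (hζ : ζ ^ b = 1) :
    aeval ![X 0, C ζ * X 1] (Qpoly a b ω ζ) = Qpoly a b ω ζ := by
  rw [Qpoly, map_prod]
  simp_rw [scale1_fct a b ω hζ]
  exact Equiv.prod_comp ((Equiv.refl (ZMod a)).prodCongr (Equiv.addRight (1 : ZMod b)))
    (fct a b ω ζ)

lemma erase_reindex (σ : ZMod a × ZMod b ≃ ZMod a × ZMod b) (t : ZMod a × ZMod b) :
    ∏ t' ∈ Finset.univ.erase t, fct a b ω ζ (σ t') =
    ∏ t' ∈ Finset.univ.erase (σ t), fct a b ω ζ t' := by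
  refine Finset.prod_nbij' (fun x => σ x) (fun x => σ.symm x) ?_ ?_ ?_ ?_ ?_
  · intro x hx
    simp only [Finset.mem_erase, Finset.mem_univ, and_true] at hx ⊢
    exact fun h => hx (σ.injective h)
  · intro x hx
    simp only [Finset.mem_erase, Finset.mem_univ, and_true] at hx ⊢
    intro h; apply hx; rw [← h, Equiv.apply_symm_apply]
  · intro x _; exact σ.symm_apply_apply x
  · intro x _; exact σ.apply_symm_apply x
  · intro x _; rfl

lemma scale0_Ppoly {ω : ℂ} (hω : ω ^ a = 1) :
    aeval ![C ω * X 0, X 1] (Ppoly a b ω ζ) = Ppoly a b ω ζ := by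
  rw [Ppoly, map_sum]
  have : ∀ t : ZMod a × ZMod b,
      aeval ![C ω * X 0, X 1] (∏ t' ∈ Finset.univ.erase t, fct a b ω ζ t') =
      ∏ t' ∈ Finset.univ.erase
        (((Equiv.addRight (1 : ZMod a)).prodCongr (Equiv.refl (ZMod b))) t), fct a b ω ζ t' := by
    intro t
    rw [map_prod]
    simp_rw [scale0_fct a b ζ hω]
    exact erase_reindex a b ω ζ ((Equiv.addRight (1 : ZMod a)).prodCongr (Equiv.refl (ZMod b))) t
  simp_rw [this]
  exact Equiv.sum_comp ((Equiv.addRight (1 : ZMod a)).prodCongr (Equiv.refl (ZMod b)))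
    (fun t => ∏ t' ∈ Finset.univ.erase t, fct a b ω ζ t')

lemma scale1_Ppoly {ζ : ℂ} (hζ : ζ ^ b = 1) :
    aeval ![X 0, C ζ * X 1] (Ppoly a b ω ζ) = Ppoly a b ω ζ := by
  rw [Ppoly, map_sum]
  have : ∀ t : ZMod a × ZMod b,
      aeval ![X 0, C ζ * X 1] (∏ t' ∈ Finset.univ.erase t, fct a b ω ζ t') =
      ∏ t' ∈ Finset.univ.erase
        (((Equiv.refl (ZMod a)).prodCongr (Equiv.addRight (1 : ZMod b))) t), fct a b ω ζ t' := by
    intro t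
    rw [map_prod]
    simp_rw [scale1_fct a b ω hζ]
    exact erase_reindex a b ω ζ ((Equiv.refl (ZMod a)).prodCongr (Equiv.addRight (1 : ZMod b))) t
  simp_rw [this]
  exact Equiv.sum_comp ((Equiv.refl (ZMod a)).prodCongr (Equiv.addRight (1 : ZMod b)))
    (fun t => ∏ t' ∈ Finset.univ.erase t, fct a b ω ζ t')


lemma support_dvd_of_invariant {ω : ℂ} (hprim : IsPrimitiveRoot ω a)
    (R : MvPolynomial (Fin 2) ℂ) (hinv : aeval ![C ω * X 0, X 1] R = R)
    (d : Fin 2 →₀ ℕ) (hd : d ∈ R.support) : a ∣ d 0 := by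
  have h := coeff_scale0 ω R d
  rw [hinv] at h
  have hne : coeff d R ≠ 0 := MvPolynomial.mem_support_iff.1 hd
  have : ω ^ (d 0) = 1 := by
    by_contra hc
    exact hne (by
      have := sub_eq_zero.2 h.symm
      rw [← sub_one_mul] at this
      rcases mul_eq_zero.1 this with h' | h'
      · exact absurd (by linear_combination h') hc
      · exact h')
  exact (hprim.pow_eq_one_iff_dvd _).1 this

lemma support_dvd_of_invariant' {ζ : ℂ} (hprim : IsPrimitiveRoot ζ b)
    (R : MvPolynomial (Fin 2) ℂ) (hinv : aeval ![X 0, C ζ * X 1] R = R)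
    (d : Fin 2 →₀ ℕ) (hd : d ∈ R.support) : b ∣ d 1 := by
  have h := coeff_scale1 ζ R d
  rw [hinv] at h
  have hne : coeff d R ≠ 0 := MvPolynomial.mem_support_iff.1 hd
  have : ζ ^ (d 1) = 1 := by
    by_contra hc
    exact hne (by
      have := sub_eq_zero.2 h.symm
      rw [← sub_one_mul] at this
      rcases mul_eq_zero.1 this with h' | h'
      · exact absurd (by linear_combination h') hc
      · exact h')
  exact (hprim.pow_eq_one_iff_dvd _).1 this

lemma sum_zmod (g : ℕ → ℂ) : ∑ j : ZMod a, g j.val = ∑ j ∈ range a, g j := by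
  rw [← Fin.sum_univ_eq_sum_range g a]
  apply Finset.sum_nbij' (fun (j : ZMod a) => (⟨j.val, ZMod.val_lt j⟩ : Fin a))
    (fun (j : Fin a) => ((j : ℕ) : ZMod a))
  · intro x _; exact Finset.mem_univ _
  · intro x _; exact Finset.mem_univ _
  · intro x _; exact ZMod.natCast_rightInverse x
  · intro x _
    ext
    exact ZMod.val_cast_of_lt x.is_lt
  · intro x _; rfl

lemma filter_sum {ω : ℂ} (hprim : IsPrimitiveRoot ω a) (M : ℕ) :
    ∑ j : ZMod a, ω ^ (j.val * M) = if a ∣ M then (a : ℂ) else 0 := by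
  have h1 : ∀ j : ZMod a, ω ^ (j.val * M) = (ω ^ M) ^ j.val := by
    intro j; rw [← pow_mul, mul_comm]
  simp_rw [h1]
  rw [sum_zmod a (fun j => (ω ^ M) ^ j)]
  by_cases h : a ∣ M
  · have : ω ^ M = 1 := (hprim.pow_eq_one_iff_dvd M).2 h
    simp [this, h]
  · have h1' : ω ^ M ≠ 1 := fun e => h ((hprim.pow_eq_one_iff_dvd M).1 e)
    rw [geom_sum_eq h1', if_neg h]
    have : (ω ^ M) ^ a = 1 := by
      rw [← pow_mul, mul_comm, pow_mul, hprim.pow_eq_one, one_pow]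
    rw [this]
    simp


lemma hasSum_filtered {ω ζ : ℂ} (hω : IsPrimitiveRoot ω a) (hζ : IsPrimitiveRoot ζ b)
    (hωn : ‖ω‖ = 1) (hζn : ‖ζ‖ = 1) (u v : ℂ) (h : ‖u‖ + ‖v‖ < 1) :
    HasSum (fun p : ℕ × ℕ =>
        ((a * p.1 + b * p.2).choose (a * p.1) : ℂ) * u ^ (a * p.1) * v ^ (b * p.2))
      ((((a : ℂ) * b))⁻¹ *
        ∑ t : ZMod a × ZMod b, (1 - ω ^ t.1.val * u - ζ ^ t.2.val * v)⁻¹) := by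
  set F : ℕ × ℕ → ℂ := fun p => ((a : ℂ) * b)⁻¹ *
    ∑ t : ZMod a × ZMod b, ((p.1 + p.2).choose p.1 : ℂ) *
      (ω ^ t.1.val * u) ^ p.1 * (ζ ^ t.2.val * v) ^ p.2 with hFdef
  have hF : HasSum F ((((a : ℂ) * b))⁻¹ *
      ∑ t : ZMod a × ZMod b, (1 - ω ^ t.1.val * u - ζ ^ t.2.val * v)⁻¹) := by
    apply HasSum.mul_left
    apply hasSum_sum
    intro t _
    apply hasSum_binom
    rw [norm_mul, norm_mul, norm_pow, norm_pow, hωn, hζn, one_pow, one_pow, one_mul, one_mul]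
    exact h
  have hFval : ∀ p : ℕ × ℕ, F p = ((a : ℂ) * b)⁻¹ *
      (((p.1 + p.2).choose p.1 : ℂ) * u ^ p.1 * v ^ p.2 *
        ((if a ∣ p.1 then (a : ℂ) else 0) * (if b ∣ p.2 then (b : ℂ) else 0))) := by
    rintro ⟨M, N⟩
    rw [hFdef]
    simp only
    congr 1
    rw [← filter_sum a hω M, ← filter_sum b hζ N]
    calc ∑ t : ZMod a × ZMod b, ((M + N).choose M : ℂ) *
            (ω ^ t.1.val * u) ^ M * (ζ ^ t.2.val * v) ^ N
        = ∑ j : ZMod a, ∑ k : ZMod b, (((M + N).choose M : ℂ) * u ^ M * v ^ N) *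
            (ω ^ (j.val * M) * ζ ^ (k.val * N)) := by
          rw [Fintype.sum_prod_type]
          refine Finset.sum_congr rfl fun j _ => Finset.sum_congr rfl fun k _ => ?_
          rw [mul_pow, mul_pow, mul_comm j.val M, mul_comm k.val N, pow_mul, pow_mul]
          ring
      _ = (((M + N).choose M : ℂ) * u ^ M * v ^ N) *
            ((∑ j : ZMod a, ω ^ (j.val * M)) * (∑ k : ZMod b, ζ ^ (k.val * N))) := by
          rw [Finset.sum_mul_sum, Finset.mul_sum]
          refine Finset.sum_congr rfl fun j _ => ?_
          rw [Finset.mul_sum]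
  have hinj : Function.Injective (fun p : ℕ × ℕ => (a * p.1, b * p.2)) := by
    have ha : a ≠ 0 := NeZero.ne a
    have hb : b ≠ 0 := NeZero.ne b
    rintro ⟨m, n⟩ ⟨m', n'⟩ hmn
    simp only [Prod.mk.injEq] at hmn
    exact Prod.ext (Nat.eq_of_mul_eq_mul_left (Nat.pos_of_ne_zero ha) hmn.1)
      (Nat.eq_of_mul_eq_mul_left (Nat.pos_of_ne_zero hb) hmn.2)
  have hvanish : ∀ p : ℕ × ℕ, p ∉ Set.range (fun q : ℕ × ℕ => (a * q.1, b * q.2)) → F p = 0 := by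
    rintro ⟨M, N⟩ hp
    rw [hFval]
    simp only
    have : ¬ (a ∣ M ∧ b ∣ N) := by
      rintro ⟨⟨m, rfl⟩, ⟨n, rfl⟩⟩
      exact hp ⟨(m, n), rfl⟩
    rcases Decidable.not_and_iff_or_not.1 this with h' | h' <;> simp [h']
  rw [← Function.Injective.hasSum_iff hinj hvanish] at hF
  convert hF using 1
  funext p
  simp only [Function.comp_apply]
  rw [hFval]
  simp only
  have ha : (a:ℂ) ≠ 0 := Nat.cast_ne_zero.2 (NeZero.ne a)
  have hb : (b:ℂ) ≠ 0 := Nat.cast_ne_zero.2 (NeZero.ne b)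
  rw [if_pos ⟨p.1, rfl⟩, if_pos ⟨p.2, rfl⟩]
  field_simp


lemma norm_eq_one_of_pow (ω : ℂ) (a : ℕ) (ha : a ≠ 0) (h : ω ^ a = 1) : ‖ω‖ = 1 := by
  have hx : ‖ω‖ ^ a = 1 := by rw [← norm_pow, h, norm_one]
  have h0 : (0:ℝ) ≤ ‖ω‖ := norm_nonneg _
  rcases lt_trichotomy ‖ω‖ 1 with h1 | h1 | h1
  · nlinarith [pow_lt_one₀ h0 h1 ha]
  · exact h1
  · nlinarith [one_lt_pow₀ h1 ha]

theorem f_s1_s2_is_rational (s₁ s₂ : ℕ) (hs₁ : 0 < s₁) (hs₂ : 0 < s₂) :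
    IsRationalBivariateSeries
      (fun m₁ m₂ => ((s₁ * m₁ + s₂ * m₂)! : ℂ) / ((s₁ * m₁)! * (s₂ * m₂)!)) := by
  classical
  haveI : NeZero s₁ := ⟨hs₁.ne'⟩
  haveI : NeZero s₂ := ⟨hs₂.ne'⟩
  set ω := Complex.exp (2 * Real.pi * Complex.I / s₁) with hωdef
  set ζ := Complex.exp (2 * Real.pi * Complex.I / s₂) with hζdef
  have hωp : IsPrimitiveRoot ω s₁ := Complex.isPrimitiveRoot_exp s₁ hs₁.ne'
  have hζp : IsPrimitiveRoot ζ s₂ := Complex.isPrimitiveRoot_exp s₂ hs₂.ne'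
  have hωn : ‖ω‖ = 1 := norm_eq_one_of_pow ω s₁ hs₁.ne' hωp.pow_eq_one
  have hζn : ‖ζ‖ = 1 := norm_eq_one_of_pow ζ s₂ hs₂.ne' hζp.pow_eq_one
  have hc1 : (s₁ : ℂ) ≠ 0 := Nat.cast_ne_zero.2 hs₁.ne'
  have hc2 : (s₂ : ℂ) ≠ 0 := Nat.cast_ne_zero.2 hs₂.ne'
  have hQdvd : ∀ d ∈ (Qpoly s₁ s₂ ω ζ).support, s₁ ∣ d 0 ∧ s₂ ∣ d 1 := fun d hd =>
    ⟨support_dvd_of_invariant s₁ hωp _ (scale0_Qpoly s₁ s₂ ζ hωp.pow_eq_one) d hd,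
     support_dvd_of_invariant' s₂ hζp _ (scale1_Qpoly s₁ s₂ ω hζp.pow_eq_one) d hd⟩
  have hPdvd : ∀ d ∈ (Ppoly s₁ s₂ ω ζ).support, s₁ ∣ d 0 ∧ s₂ ∣ d 1 := fun d hd =>
    ⟨support_dvd_of_invariant s₁ hωp _ (scale0_Ppoly s₁ s₂ ζ hωp.pow_eq_one) d hd,
     support_dvd_of_invariant' s₂ hζp _ (scale1_Ppoly s₁ s₂ ω hζp.pow_eq_one) d hd⟩
  refine ⟨compress s₁ s₂ (Ppoly s₁ s₂ ω ζ),
    C ((s₁ : ℂ) * s₂) * compress s₁ s₂ (Qpoly s₁ s₂ ω ζ), ?_,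
    min ((2:ℝ)⁻¹ ^ s₁) ((2:ℝ)⁻¹ ^ s₂), lt_min (by positivity) (by positivity), ?_⟩
  · -- nonvanishing at 0
    have h00 : (fun _ => (0:ℂ)) = ![(0:ℂ), 0] := by
      funext i; fin_cases i <;> rfl
    rw [h00, map_mul, eval_C]
    have hQ0 : eval ![(0:ℂ), 0] (compress s₁ s₂ (Qpoly s₁ s₂ ω ζ)) = 1 := by
      have h := eval_compress s₁ s₂ (Qpoly s₁ s₂ ω ζ) hQdvd 0 0
      rw [zero_pow hs₁.ne', zero_pow hs₂.ne'] at h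
      rw [h, Qpoly, map_prod]
      rw [Finset.prod_eq_one]
      intro t _
      simp [fct]
    rw [hQ0, mul_one]
    exact mul_ne_zero hc1 hc2
  · intro x y hx hy
    obtain ⟨u, hu⟩ := IsAlgClosed.exists_pow_nat_eq x hs₁
    obtain ⟨v, hv⟩ := IsAlgClosed.exists_pow_nat_eq y hs₂
    have hun : ‖u‖ < 2⁻¹ := by
      refine lt_of_pow_lt_pow_left₀ s₁ (by norm_num) ?_
      rw [← norm_pow, hu]
      exact lt_of_lt_of_le hx (min_le_left _ _)
    have hvn : ‖v‖ < 2⁻¹ := by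
      refine lt_of_pow_lt_pow_left₀ s₂ (by norm_num) ?_
      rw [← norm_pow, hv]
      exact lt_of_lt_of_le hy (min_le_right _ _)
    have huv : ‖u‖ + ‖v‖ < 1 := by
      have : (2:ℝ)⁻¹ + 2⁻¹ = 1 := by norm_num
      linarith
    set g : ZMod s₁ × ZMod s₂ → ℂ := fun t => 1 - ω ^ t.1.val * u - ζ ^ t.2.val * v with hgdef
    have hne : ∀ t, g t ≠ 0 := by
      intro t heq
      have h1 : ω ^ t.1.val * u + ζ ^ t.2.val * v = 1 := by
        have := heq
        rw [hgdef] at this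
        simp only [sub_eq_zero] at this
        linear_combination -this
      have h2 : ‖ω ^ t.1.val * u + ζ ^ t.2.val * v‖ ≤ ‖u‖ + ‖v‖ := by
        refine le_trans (norm_add_le _ _) ?_
        rw [norm_mul, norm_mul, norm_pow, norm_pow, hωn, hζn, one_pow, one_pow,
          one_mul, one_mul]
      rw [h1, norm_one] at h2
      linarith
    have hs := hasSum_filtered s₁ s₂ hωp hζp hωn hζn u v huv
    have hfun : (fun mn : ℕ × ℕ =>
        ((s₁ * mn.1 + s₂ * mn.2)! : ℂ) / ((s₁ * mn.1)! * (s₂ * mn.2)!) * x ^ mn.1 * y ^ mn.2) =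
        (fun p : ℕ × ℕ =>
          ((s₁ * p.1 + s₂ * p.2).choose (s₁ * p.1) : ℂ) * u ^ (s₁ * p.1) * v ^ (s₂ * p.2)) := by
      funext p
      rw [← hu, ← hv, ← pow_mul, ← pow_mul]
      congr 1
      congr 1
      set M := s₁ * p.1
      set N := s₂ * p.2
      have hfact : (M + N).choose M * M ! * N ! = (M + N)! := by
        have h := Nat.choose_mul_factorial_mul_factorial (Nat.le_add_right M N)
        rwa [Nat.add_sub_cancel_left] at h
      rw [div_eq_iff (mul_ne_zero (Nat.cast_ne_zero.2 M.factorial_ne_zero)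
        (Nat.cast_ne_zero.2 N.factorial_ne_zero))]
      push_cast [← hfact]
      ring
    rw [hfun]
    have heval : eval ![x, y] (compress s₁ s₂ (Ppoly s₁ s₂ ω ζ)) /
        eval ![x, y] (C ((s₁ : ℂ) * s₂) * compress s₁ s₂ (Qpoly s₁ s₂ ω ζ)) =
        ((s₁ : ℂ) * s₂)⁻¹ * ∑ t : ZMod s₁ × ZMod s₂, (g t)⁻¹ := by
      rw [← hu, ← hv, map_mul, eval_C, eval_compress s₁ s₂ _ hPdvd,
        eval_compress s₁ s₂ _ hQdvd]
      have hevQ : eval ![u, v] (Qpoly s₁ s₂ ω ζ) = ∏ t : ZMod s₁ × ZMod s₂, g t := by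
        rw [Qpoly, map_prod]
        refine Finset.prod_congr rfl fun t _ => ?_
        simp [fct, hgdef]
      have hevP : eval ![u, v] (Ppoly s₁ s₂ ω ζ) =
          ∑ t : ZMod s₁ × ZMod s₂, ∏ t' ∈ Finset.univ.erase t, g t' := by
        rw [Ppoly, map_sum]
        refine Finset.sum_congr rfl fun t _ => ?_
        rw [map_prod]
        refine Finset.prod_congr rfl fun t' _ => ?_
        simp [fct, hgdef]
      rw [hevQ, hevP]
      have hD : (∏ t : ZMod s₁ × ZMod s₂, g t) ≠ 0 :=
        Finset.prod_ne_zero_iff.2 fun t _ => hne t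
      have hNS : ∑ t : ZMod s₁ × ZMod s₂, ∏ t' ∈ Finset.univ.erase t, g t' =
          (∑ t : ZMod s₁ × ZMod s₂, (g t)⁻¹) * ∏ t : ZMod s₁ × ZMod s₂, g t := by
        rw [Finset.sum_mul]
        refine Finset.sum_congr rfl fun t _ => ?_
        rw [← Finset.mul_prod_erase Finset.univ g (Finset.mem_univ t), ← mul_assoc,
          inv_mul_cancel₀ (hne t), one_mul]
      rw [hNS]
      field_simp
    rw [heval]
    exact hs

end
end
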